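/- Free involutory quandles are left orderable: for any set S, the free involutory quandle on S admits a strict linear order < such that x < y implies z*x < z*y for all z. -/

import Mathlib

/-- The set of all conjugates of elements of `S` in `G`. -/
def conjSet (G : Type*) [Group G] (S : Set G) : Set G :=
  {x | ∃ s ∈ S, ∃ g : G, x = g * s * g⁻¹}

theorem conjSet.conj_mem {G : Type*} [Group G] {S : Set G} {x : G}
    (hx : x ∈ conjSet G S) (g : G) : g * x * g⁻¹ ∈ conjSet G S := by
  obtain ⟨s, hs, h, rfl⟩ := hx
  exact ⟨s, hs, g * h, by group⟩

/-- The Dehn quandle operation `x * y = y x y⁻¹` on the set of conjugates of `S`. -/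
def dehnOp {G : Type*} [Group G] {S : Set G} (x y : conjSet G S) : conjSet G S :=
  ⟨(y : G) * (x : G) * (y : G)⁻¹, conjSet.conj_mem x.2 (y : G)⟩

/-- The universal Coxeter group on `S`: the free product of copies of `ℤ/2` indexed
by `S`, presented by the relations `s² = 1`. -/
abbrev UCox (S : Type*) : Type _ :=
  PresentedGroup {r : FreeGroup S | ∃ s : S, r = (FreeGroup.of s) ^ 2}

namespace FIQ

/-- Noncommutative "power series" with ℤ coefficients over words in `S`. -/
def M (S : Type*) : Type _ := List S → ℤ

namespace M

variable {S : Type*}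

open Classical in
noncomputable instance : One (M S) := ⟨fun l => if l = [] then 1 else 0⟩

noncomputable instance : Mul (M S) :=
  ⟨fun f g l => ∑ i ∈ Finset.range (l.length + 1), f (l.take i) * g (l.drop i)⟩

lemma mul_def (f g : M S) (l : List S) :
    (f * g) l = ∑ i ∈ Finset.range (l.length + 1), f (l.take i) * g (l.drop i) := rfl

open Classical in
lemma one_def (l : List S) : (1 : M S) l = if l = [] then 1 else 0 := rfl

@[simp] lemma one_nil : (1 : M S) [] = 1 := by simp [one_def]

lemma one_of_ne {l : List S} (h : l ≠ []) : (1 : M S) l = 0 := by simp [one_def, h]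

lemma mul_nil (f g : M S) : (f * g) [] = f [] * g [] := by
  simp [mul_def]

protected lemma one_mul (f : M S) : 1 * f = f := by
  funext l
  rw [mul_def, Finset.sum_range_succ']
  have h0 : (1 : M S) (l.take 0) * f (l.drop 0) = f l := by
    rw [List.take_zero, one_nil, List.drop_zero, one_mul]
  rw [h0]
  have : ∀ i ∈ Finset.range l.length, (1 : M S) (l.take (i+1)) * f (l.drop (i+1)) = 0 := by
    intro i hi
    rw [Finset.mem_range] at hi
    have hne : l.take (i+1) ≠ [] := by
      have : l ≠ [] := by rintro rfl; simp at hi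
      simp [List.take_eq_nil_iff, this]
    rw [one_of_ne hne, zero_mul]
  rw [Finset.sum_congr rfl this]
  simp

protected lemma mul_one (f : M S) : f * 1 = f := by
  funext l
  rw [mul_def, Finset.sum_range_succ]
  have h0 : f (l.take l.length) * (1 : M S) (l.drop l.length) = f l := by
    rw [List.take_length, List.drop_length, one_nil, mul_one]
  rw [h0]
  have : ∀ i ∈ Finset.range l.length, f (l.take i) * (1 : M S) (l.drop i) = 0 := by
    intro i hi
    rw [Finset.mem_range] at hi
    have hne : l.drop i ≠ [] := by
      intro h
      have := congrArg List.length h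
      rw [List.length_drop] at this
      simp at this; omega
    rw [one_of_ne hne, mul_zero]
  rw [Finset.sum_congr rfl this]
  simp

protected lemma mul_assoc (f g h : M S) : f * g * h = f * (g * h) := by
  funext l
  set n := l.length with hn
  have lhs : (f * g * h) l =
      ∑ j ∈ Finset.range (n + 1), ∑ i ∈ Finset.range (j + 1),
        f (l.take i) * g ((l.drop i).take (j - i)) * h (l.drop j) := by
    rw [mul_def]
    refine Finset.sum_congr rfl fun j hj => ?_
    rw [Finset.mem_range] at hj
    rw [mul_def, Finset.sum_mul]
    have hlen : (l.take j).length = j := by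
      rw [List.length_take]; omega
    rw [hlen]
    refine Finset.sum_congr rfl fun i hi => ?_
    rw [Finset.mem_range] at hi
    have e1 : (l.take j).take i = l.take i := by
      rw [List.take_take]
      congr 1
      omega
    have e2 : (l.take j).drop i = (l.drop i).take (j - i) := List.drop_take ..
    rw [e1, e2]
  have rhs : (f * (g * h)) l =
      ∑ i ∈ Finset.range (n + 1), ∑ j ∈ Finset.Ico i (n + 1),
        f (l.take i) * g ((l.drop i).take (j - i)) * h (l.drop j) := by
    rw [mul_def]
    refine Finset.sum_congr rfl fun i hi => ?_
    rw [Finset.mem_range] at hi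
    rw [mul_def, Finset.mul_sum]
    have hlen : (l.drop i).length = n - i := by rw [List.length_drop]
    rw [hlen]
    rw [Finset.sum_Ico_eq_sum_range]
    have hni : n + 1 - i = n - i + 1 := by omega
    rw [hni]
    refine Finset.sum_congr rfl fun k hk => ?_
    rw [Finset.mem_range] at hk
    have e1 : i + k - i = k := by omega
    have e2 : (l.drop i).drop k = l.drop (i + k) := List.drop_drop ..
    rw [e1, ← e2, mul_assoc]
  rw [lhs, rhs]
  rw [Finset.range_eq_Ico]
  have key := Finset.sum_Ico_Ico_comm 0 (n + 1)
    (fun i j => f (l.take i) * g ((l.drop i).take (j - i)) * h (l.drop j))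
  simpa only [Finset.range_eq_Ico] using key.symm

noncomputable instance : Monoid (M S) where
  one_mul := M.one_mul
  mul_one := M.mul_one
  mul_assoc := M.mul_assoc

end M

section Units

variable {S : Type*}

/-- `allS s l` : every letter of `l` is `s`. -/
def allS (s : S) (l : List S) : Prop := ∀ b ∈ l, b = s

open Classical in
/-- The Magnus series `1 + X_s`. -/
noncomputable def E (s : S) : M S := fun l => if l = [] ∨ l = [s] then 1 else 0

open Classical in
/-- The Magnus series `(1 + X_s)⁻¹ = 1 - X_s + X_s² - ⋯`. -/
noncomputable def V (s : S) : M S := fun l => if allS s l then (-1)^l.length else 0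

@[simp] lemma E_nil (s : S) : E s [] = 1 := by simp [E]

@[simp] lemma E_single_self (s : S) : E s [s] = 1 := by simp [E]

lemma E_single_ne {s x : S} (h : x ≠ s) : E s [x] = 0 := by
  simp [E, h]

lemma E_long {s : S} {l : List S} (h : 2 ≤ l.length) : E s l = 0 := by
  have h1 : l ≠ [] := by rintro rfl; simp at h
  have h2 : l ≠ [s] := by rintro rfl; simp at h
  simp [E, h1, h2]

lemma E_supp {s : S} {l : List S} (h : E s l ≠ 0) : allS s l := by
  by_cases h' : l = [] ∨ l = [s]
  · rcases h' with rfl | rfl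
    · intro b hb; simp at hb
    · intro b hb; simpa using hb
  · exact absurd (by simp [E, h']) h

lemma V_allS {s : S} {l : List S} (h : allS s l) : V s l = (-1)^l.length := by
  simp [V, h]

lemma V_not {s : S} {l : List S} (h : ¬ allS s l) : V s l = 0 := by
  simp [V, h]

@[simp] lemma V_nil (s : S) : V s [] = 1 := by
  have : allS s ([] : List S) := by intro b hb; simp at hb
  rw [V_allS this]; simp

lemma V_supp {s : S} {l : List S} (h : V s l ≠ 0) : allS s l := by
  by_contra h'
  exact h (V_not h')

lemma V_cons_self (s : S) (l : List S) : V s (s :: l) = - V s l := by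
  by_cases h : allS s l
  · have h' : allS s (s :: l) := by
      intro b hb
      rcases List.mem_cons.1 hb with rfl | hb
      · rfl
      · exact h b hb
    rw [V_allS h, V_allS h']
    simp [pow_succ, mul_comm]
  · have h' : ¬ allS s (s :: l) := fun hh => h (fun b hb => hh b (List.mem_cons_of_mem _ hb))
    rw [V_not h, V_not h']; simp

lemma allS_take {s : S} {l : List S} (h : allS s l) (i : ℕ) : allS s (l.take i) :=
  fun b hb => h b (List.mem_of_mem_take hb)

lemma allS_drop {s : S} {l : List S} (h : allS s l) (i : ℕ) : allS s (l.drop i) :=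
  fun b hb => h b (List.mem_of_mem_drop hb)

lemma allS_replicate (s : S) (n : ℕ) : allS s (List.replicate n s) :=
  fun b hb => (List.eq_of_mem_replicate hb)

lemma allS_eq_replicate {s : S} {l : List S} (h : allS s l) : l = List.replicate l.length s :=
  List.eq_replicate_iff.2 ⟨rfl, h⟩

lemma EV (s : S) : E s * V s = 1 := by
  funext l
  cases l with
  | nil => rw [M.mul_nil]; simp
  | cons a l' =>
    have hlen : (a :: l').length = l'.length + 1 := rfl
    rw [M.mul_def]
    rw [hlen, Finset.sum_range_succ', Finset.sum_range_succ']
    have hz : ∀ i ∈ Finset.range l'.length,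
        E s ((a :: l').take (i + 1 + 1)) * V s ((a :: l').drop (i + 1 + 1)) = 0 := by
      intro i hi
      rw [Finset.mem_range] at hi
      have : ((a :: l').take (i + 1 + 1)).length = i + 2 := by
        rw [List.length_take, hlen]; omega
      rw [E_long (by omega : 2 ≤ ((a :: l').take (i + 1 + 1)).length), zero_mul]
    rw [Finset.sum_congr rfl hz]
    have ht1 : (a :: l').take 1 = [a] := rfl
    have hd1 : (a :: l').drop 1 = l' := rfl
    have ht0 : (a :: l').take 0 = [] := rfl
    have hd0 : (a :: l').drop 0 = a :: l' := rfl
    rw [ht1, hd1, ht0, hd0, E_nil, one_mul]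
    simp only [Finset.sum_const_zero, zero_add]
    by_cases ha : a = s
    · subst ha
      rw [E_single_self, one_mul, V_cons_self]
      have : (a :: l') ≠ [] := by simp
      rw [M.one_of_ne this]
      ring
    · rw [E_single_ne ha, zero_mul]
      have hns : ¬ allS s (a :: l') := by
        intro hh
        exact ha (hh a List.mem_cons_self)
      rw [V_not hns]
      have : (a :: l') ≠ [] := by simp
      rw [M.one_of_ne this]
      ring

lemma VE (s : S) : V s * E s = 1 := by
  funext l
  cases l with
  | nil => rw [M.mul_nil]; simp
  | cons a l'' =>
    set l := a :: l'' with hl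
    set n := l''.length with hn
    have hlen : l.length = n + 1 := rfl
    rw [M.mul_def, hlen, Finset.sum_range_succ, Finset.sum_range_succ]
    have hz : ∀ i ∈ Finset.range n, V s (l.take i) * E s (l.drop i) = 0 := by
      intro i hi
      rw [Finset.mem_range] at hi
      have : (l.drop i).length = n + 1 - i := by rw [List.length_drop, hlen]
      rw [E_long (by omega : 2 ≤ (l.drop i).length), mul_zero]
    rw [Finset.sum_congr rfl hz]
    simp only [Finset.sum_const_zero, zero_add]
    have htfull : l.take (n+1) = l := by
      rw [← hlen, List.take_length]
    have hdfull : l.drop (n+1) = [] := by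
      rw [← hlen, List.drop_length]
    rw [htfull, hdfull, E_nil, mul_one]
    have hdrop_len : (l.drop n).length = 1 := by
      rw [List.length_drop, hlen]; omega
    by_cases hall : allS s l
    · have htake : l.take n = List.replicate n s := by
        have := allS_eq_replicate (allS_take hall n)
        rwa [List.length_take, hlen, min_eq_left (by omega)] at this
      have hdrop : l.drop n = [s] := by
        have := allS_eq_replicate (allS_drop hall n)
        rw [hdrop_len] at this
        simpa using this
      rw [htake, hdrop, E_single_self, mul_one, V_allS hall,
        V_allS (allS_replicate s n), hlen, List.length_replicate]
      have hone : (1 : M S) l = 0 := M.one_of_ne (by simp [hl])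
      rw [hone, pow_succ]
      ring
    · rw [V_not hall]
      have hone : (1 : M S) l = 0 := M.one_of_ne (by simp [hl])
      rw [hone]
      simp only [zero_add, add_zero]
      by_cases hE : E s (l.drop n) = 0
      · rw [hE, mul_zero]
      · by_cases hV : V s (l.take n) = 0
        · rw [hV, zero_mul]
        · exfalso
          apply hall
          have h1 := V_supp hV
          have h2 := E_supp hE
          intro b hb
          rw [← List.take_append_drop n l] at hb
          rcases List.mem_append.1 hb with hb | hb
          · exact h1 b hb
          · exact h2 b hb

/-- The Magnus unit `1 + X_s`. -/
noncomputable def U (s : S) : (M S)ˣ := ⟨E s, V s, EV s, VE s⟩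

/-- The Magnus homomorphism. -/
noncomputable def μh : FreeGroup S →* (M S)ˣ := FreeGroup.lift (fun s => U s)

@[simp] lemma U_val (s : S) : ((U s : (M S)ˣ) : M S) = E s := rfl

@[simp] lemma U_inv_val (s : S) : (((U s)⁻¹ : (M S)ˣ) : M S) = V s := rfl

end Units

section Supports

variable {S : Type*}

/-- `MSupp s f` : `f` is supported on words all of whose letters are `s`. -/
def MSupp (s : S) (f : M S) : Prop := ∀ l, f l ≠ 0 → allS s l

lemma MSupp_one (s : S) : MSupp s (1 : M S) := by
  intro l hl
  by_cases h : l = []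
  · subst h; intro b hb; simp at hb
  · exact absurd (M.one_of_ne h) hl

lemma MSupp_mul {s : S} {f g : M S} (hf : MSupp s f) (hg : MSupp s g) : MSupp s (f * g) := by
  intro l hl
  rw [M.mul_def] at hl
  obtain ⟨i, _, hi⟩ := Finset.exists_ne_zero_of_sum_ne_zero hl
  have h1 : f (l.take i) ≠ 0 := fun h => hi (by rw [h, zero_mul])
  have h2 : g (l.drop i) ≠ 0 := fun h => hi (by rw [h, mul_zero])
  intro b hb
  rw [← List.take_append_drop i l] at hb
  rcases List.mem_append.1 hb with hb | hb
  · exact hf _ h1 b hb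
  · exact hg _ h2 b hb

lemma MSupp_pow {s : S} {f : M S} (hf : MSupp s f) (m : ℕ) : MSupp s (f ^ m) := by
  induction m with
  | zero => simpa using MSupp_one s
  | succ m ih => rw [pow_succ]; exact MSupp_mul ih hf

lemma MSupp_E (s : S) : MSupp s (E s) := fun _ => E_supp

lemma MSupp_V (s : S) : MSupp s (V s) := fun _ => V_supp

lemma Epow_long (s : S) (m : ℕ) : ∀ l : List S, m < l.length → (E s ^ m) l = 0 := by
  induction m with
  | zero =>
    intro l hl
    rw [pow_zero]
    exact M.one_of_ne (by rintro rfl; simp at hl)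
  | succ m ih =>
    intro l hl
    rw [pow_succ, M.mul_def]
    apply Finset.sum_eq_zero
    intro i hi
    rw [Finset.mem_range] at hi
    by_cases hlong : 2 ≤ (l.drop i).length
    · rw [E_long hlong, mul_zero]
    · have hilen : (l.take i).length = i := by
        rw [List.length_take]
        rw [List.length_drop] at hlong
        omega
      have : m < (l.take i).length := by
        rw [hilen]
        rw [List.length_drop] at hlong
        omega
      rw [ih _ this, zero_mul]

lemma Epow_full (s : S) (m : ℕ) : (E s ^ m) (List.replicate m s) = 1 := by
  induction m with
  | zero =>
    rw [pow_zero]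
    show (1 : M S) [] = 1
    exact M.one_nil
  | succ m ih =>
    rw [pow_succ, M.mul_def]
    have hlen : (List.replicate (m+1) s).length = m + 1 := List.length_replicate ..
    rw [hlen]
    rw [Finset.sum_eq_single_of_mem m (Finset.mem_range.2 (by omega))]
    · rw [List.take_replicate, List.drop_replicate, min_eq_left (by omega)]
      have : m + 1 - m = 1 := by omega
      rw [this]
      have : List.replicate 1 s = [s] := rfl
      rw [this, E_single_self, mul_one, ih]
    · intro i hi hne
      rw [Finset.mem_range] at hi
      rw [List.take_replicate, List.drop_replicate]
      rcases lt_or_gt_of_ne hne with h | h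
      · have : 2 ≤ (List.replicate (m + 1 - i) s).length := by
          rw [List.length_replicate]; omega
        rw [E_long this, mul_zero]
      · have hmin : min i (m+1) = m + 1 := by omega
        rw [hmin]
        have : m < (List.replicate (m+1) s).length := by rw [List.length_replicate]; omega
        rw [Epow_long s m _ this, zero_mul]

lemma Vpow_sign (s : S) (m : ℕ) (hm : 1 ≤ m) :
    ∀ i : ℕ, 0 < (-1 : ℤ)^i * (V s ^ m) (List.replicate i s) := by
  induction m, hm using Nat.le_induction with
  | base =>
    intro i
    rw [pow_one, V_allS (allS_replicate s i), List.length_replicate, ← pow_add]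
    have : (-1 : ℤ)^(i+i) = 1 := by
      have : i + i = 2 * i := by omega
      rw [this, pow_mul]
      norm_num
    rw [this]
    norm_num
  | succ m hm ih =>
    intro i
    rw [pow_succ, M.mul_def, List.length_replicate, Finset.mul_sum]
    have hterm : ∀ j ∈ Finset.range (i+1),
        (-1:ℤ)^i * ((V s ^ m) ((List.replicate i s).take j) * V s ((List.replicate i s).drop j))
        = (-1:ℤ)^j * (V s ^ m) (List.replicate j s) := by
      intro j hj
      rw [Finset.mem_range] at hj
      rw [List.take_replicate, List.drop_replicate, min_eq_left (by omega),
        V_allS (allS_replicate s (i - j)), List.length_replicate]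
      have hsgn : (-1:ℤ)^i * ((-1:ℤ)^(i-j)) = (-1:ℤ)^j := by
        rw [← pow_add]
        have : i + (i - j) = j + 2 * (i - j) := by omega
        rw [this, pow_add, pow_mul]
        norm_num
      calc (-1:ℤ)^i * ((V s ^ m) (List.replicate j s) * (-1:ℤ)^(i-j))
          = ((-1:ℤ)^i * (-1:ℤ)^(i-j)) * (V s ^ m) (List.replicate j s) := by ring
        _ = (-1:ℤ)^j * (V s ^ m) (List.replicate j s) := by rw [hsgn]
    rw [Finset.sum_congr rfl hterm]
    apply Finset.sum_pos
    · intro j _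
      exact ih j
    · exact ⟨0, by simp⟩

end Supports

section Runs

variable {S : Type*}

open Classical in
/-- Number of maximal constant runs in a word. -/
noncomputable def runs : List S → ℕ
  | [] => 0
  | a :: l => runs l + if l.head? = some a then 0 else 1

@[simp] lemma runs_nil : runs ([] : List S) = 0 := rfl

open Classical in
lemma runs_cons (a : S) (l : List S) :
    runs (a :: l) = runs l + if l.head? = some a then 0 else 1 := rfl

lemma runs_cons_of_head {a : S} {l : List S} (h : l.head? = some a) :
    runs (a :: l) = runs l := by
  rw [runs_cons, if_pos h, add_zero]

lemma runs_cons_of_ne {a : S} {l : List S} (h : l.head? ≠ some a) :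
    runs (a :: l) = runs l + 1 := by
  rw [runs_cons, if_neg h]

lemma runs_pos (a : S) (l : List S) : 1 ≤ runs (a :: l) := by
  induction l generalizing a with
  | nil => rw [runs_cons_of_ne (by simp)]; omega
  | cons b l ih =>
    have := ih b
    rw [runs_cons]
    split_ifs <;> omega

lemma runs_cons_le (a : S) (l : List S) : runs l ≤ runs (a :: l) := by
  rw [runs_cons]; split_ifs <;> omega

lemma rep_append_head (s : S) {n : ℕ} (hn : 1 ≤ n) (r : List S) :
    (List.replicate n s ++ r).head? = some s := by
  obtain ⟨k, rfl⟩ : ∃ k, n = k + 1 := ⟨n - 1, by omega⟩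
  rw [List.replicate_succ, List.cons_append, List.head?_cons]

lemma runs_rep_append_head {s : S} {j : ℕ} (hj : 1 ≤ j) {r : List S}
    (h : r.head? = some s) : runs (List.replicate j s ++ r) = runs r := by
  induction j, hj using Nat.le_induction with
  | base =>
    have h1 : List.replicate 1 s ++ r = s :: r := rfl
    rw [h1, runs_cons_of_head h]
  | succ j hj ih =>
    rw [List.replicate_succ, List.cons_append,
      runs_cons_of_head (rep_append_head s hj r), ih]

lemma runs_rep_append_ne {s : S} {j : ℕ} (hj : 1 ≤ j) {r : List S}
    (h : r.head? ≠ some s) : runs (List.replicate j s ++ r) = runs r + 1 := by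
  induction j, hj using Nat.le_induction with
  | base =>
    have h1 : List.replicate 1 s ++ r = s :: r := rfl
    rw [h1, runs_cons_of_ne h]
  | succ j hj ih =>
    rw [List.replicate_succ, List.cons_append,
      runs_cons_of_head (rep_append_head s hj r), ih]

/-- `Dec ss l` : `l` decomposes as an ordered concatenation of constant blocks
with letters given by `ss`. -/
inductive Dec : List S → List S → Prop
  | nil : Dec [] []
  | cons (s : S) (n : ℕ) {ss l : List S} :
      Dec ss l → Dec (s :: ss) (List.replicate n s ++ l)

lemma Dec.runs_le {ss l : List S} (h : Dec ss l) :
    runs l ≤ runs ss ∧ ∀ a, l.head? = some a → ss.head? = some a ∨ runs l < runs ss := by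
  induction h with
  | nil => exact ⟨le_refl 0, by simp⟩
  | cons s n h ih =>
    obtain ⟨ih1, ih2⟩ := ih
    rename_i ss l
    rcases Nat.eq_zero_or_pos n with rfl | hn
    · rw [List.replicate_zero, List.nil_append]
      refine ⟨le_trans ih1 (runs_cons_le s ss), ?_⟩
      intro a ha
      rcases ih2 a ha with hh | hh
      · by_cases has : a = s
        · subst has; left; rw [List.head?_cons]
        · right
          rw [runs_cons_of_ne (by rw [hh]; simpa using has)]
          omega
      · right
        calc runs l < runs ss := hh
          _ ≤ runs (s :: ss) := runs_cons_le s ss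
    · have hhead : (List.replicate n s ++ l).head? = some s := rep_append_head s hn l
      constructor
      · by_cases hls : l.head? = some s
        · rw [runs_rep_append_head hn hls]
          calc runs l ≤ runs ss := ih1
            _ ≤ runs (s :: ss) := runs_cons_le s ss
        · rw [runs_rep_append_ne hn hls]
          cases hl : l.head? with
          | none =>
            have hle : l = [] := by
              cases l with
              | nil => rfl
              | cons x xs => simp at hl
            subst hle
            have := runs_pos s ss
            simp only [runs_nil]
            omega
          | some a =>
            rcases ih2 a hl with hh | hh
            · have has : a ≠ s := fun has => hls (has ▸ hl)
              rw [runs_cons_of_ne (by rw [hh]; simpa using has)]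
              omega
            · have := runs_cons_le s ss
              omega
      · intro a ha
        rw [hhead] at ha
        left
        rw [List.head?_cons]
        exact ha.symm ▸ rfl

end Runs

section Main

variable {S : Type*}

/-- Letter unit. -/
noncomputable def Wu (p : S × Bool) : (M S)ˣ := cond p.2 (U p.1) ((U p.1)⁻¹)

lemma μ_mk_single (p : S × Bool) : μh (FreeGroup.mk [p]) = Wu p := by
  obtain ⟨s, b⟩ := p
  cases b with
  | true =>
    show μh (FreeGroup.of s) = U s
    exact FreeGroup.lift_apply_of
  | false =>
    have h1 : FreeGroup.of s * FreeGroup.mk [(s, false)] = 1 := by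
      rw [show FreeGroup.of s = FreeGroup.mk [(s, true)] from rfl, FreeGroup.mul_mk,
        FreeGroup.one_eq_mk]
      exact Quot.sound FreeGroup.Red.Step.cons_not
    have h2 : FreeGroup.mk [(s, false)] = (FreeGroup.of s)⁻¹ :=
      eq_inv_of_mul_eq_one_right h1
    show μh (FreeGroup.mk [(s, false)]) = (U s)⁻¹
    rw [h2, map_inv]
    have h3 : μh (FreeGroup.of s) = U s := FreeGroup.lift_apply_of
    rw [h3]

lemma mk_replicate_pow (m : ℕ) (p : S × Bool) :
    FreeGroup.mk (List.replicate m p) = (FreeGroup.mk [p]) ^ m := by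
  induction m with
  | zero => rw [List.replicate_zero, pow_zero, FreeGroup.one_eq_mk]
  | succ m ih =>
    rw [List.replicate_succ, pow_succ',
      show (p :: List.replicate m p) = [p] ++ List.replicate m p from rfl,
      ← FreeGroup.mul_mk, ih]

/-- No cancelling adjacent pair. -/
def NR (L : List (S × Bool)) : Prop :=
  ∀ (L₂ L₃ : List (S × Bool)) (x : S) (b : Bool), L ≠ L₂ ++ (x, b) :: (x, !b) :: L₃

lemma NR.suffix {L₁ L₂ : List (S × Bool)} (h : NR (L₁ ++ L₂)) : NR L₂ := by
  intro A B x b heq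
  exact h (L₁ ++ A) B x b (by rw [heq, List.append_assoc])

lemma supp_dec : ∀ (L : List (S × Bool)) (l : List S),
    (μh (FreeGroup.mk L) : M S) l ≠ 0 → Dec (L.map Prod.fst) l := by
  intro L
  induction L with
  | nil =>
    intro l h
    rw [← FreeGroup.one_eq_mk, map_one, Units.val_one] at h
    have : l = [] := by
      by_contra hne
      exact h (M.one_of_ne hne)
    subst this
    exact Dec.nil
  | cons p L' ih =>
    intro l h
    rw [show (p :: L') = [p] ++ L' from rfl, ← FreeGroup.mul_mk, map_mul, Units.val_mul,
      μ_mk_single, M.mul_def] at h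
    obtain ⟨i, _, hi⟩ := Finset.exists_ne_zero_of_sum_ne_zero h
    have h1 : ((Wu p : (M S)ˣ) : M S) (l.take i) ≠ 0 := fun hh => hi (by rw [hh, zero_mul])
    have h2 : (μh (FreeGroup.mk L') : M S) (l.drop i) ≠ 0 := fun hh => hi (by rw [hh, mul_zero])
    have hall : allS p.1 (l.take i) := by
      obtain ⟨s, b⟩ := p
      cases b with
      | true => exact E_supp h1
      | false => exact V_supp h1
    have hrep : l.take i = List.replicate (l.take i).length p.1 := allS_eq_replicate hall
    have hdec := ih _ h2
    have : Dec (p.1 :: L'.map Prod.fst) (List.replicate (l.take i).length p.1 ++ l.drop i) :=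
      Dec.cons p.1 _ hdec
    rw [← hrep, List.take_append_drop] at this
    exact this

lemma van (L'' : List (S × Bool)) (s : S) {j : ℕ} (hj : 1 ≤ j)
    (hhead : ∀ q ∈ L''.head?, q.1 ≠ s) :
    (μh (FreeGroup.mk L'') : M S) (List.replicate j s ++ L''.map Prod.fst) = 0 := by
  by_contra h
  have hdec := (supp_dec L'' _ h).runs_le.1
  have hne : (L''.map Prod.fst).head? ≠ some s := by
    cases L'' with
    | nil => simp
    | cons q tl =>
      have := hhead q (by simp)
      simpa using this
  rw [runs_rep_append_ne hj hne] at hdec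
  omega

lemma main : ∀ (N : ℕ) (L : List (S × Bool)), L.length ≤ N → NR L →
    (μh (FreeGroup.mk L) : M S) (L.map Prod.fst) ≠ 0 := by
  intro N
  induction N with
  | zero =>
    intro L hL _
    have : L = [] := List.length_eq_zero_iff.mp (by omega)
    subst this
    rw [← FreeGroup.one_eq_mk, map_one, Units.val_one]
    show (1 : M S) [] ≠ 0
    rw [M.one_nil]
    norm_num
  | succ N ih =>
    intro L hL hNR
    rcases L with _ | ⟨⟨s, b⟩, Ltl⟩
    · rw [← FreeGroup.one_eq_mk, map_one, Units.val_one]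
      show (1 : M S) [] ≠ 0
      rw [M.one_nil]
      norm_num
    · classical
      set p : S × Bool := (s, b) with hp
      obtain ⟨tk, htk⟩ : ∃ tk, tk = (p :: Ltl).takeWhile (fun q' => decide (q' = p)) :=
        ⟨_, rfl⟩
      obtain ⟨L', hL'⟩ : ∃ L', L' = (p :: Ltl).dropWhile (fun q' => decide (q' = p)) :=
        ⟨_, rfl⟩
      obtain ⟨m, hm'⟩ : ∃ m, m = tk.length := ⟨_, rfl⟩
      have htk_rep : tk = List.replicate m p := by
        refine List.eq_replicate_iff.2 ⟨hm'.symm, fun q hq => ?_⟩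
        rw [htk] at hq
        exact of_decide_eq_true
          (List.mem_takeWhile_imp (p := fun q' => decide (q' = p)) (l := p :: Ltl) hq)
      have happ : tk ++ L' = p :: Ltl := by
        rw [htk, hL']
        exact List.takeWhile_append_dropWhile ..
      have hm : 1 ≤ m := by
        rw [hm', htk, List.takeWhile_cons_of_pos (by simp)]
        simp
      have hlen2 : m + L'.length = Ltl.length + 1 := by
        have := congrArg List.length happ
        rw [List.length_append] at this
        rw [hm']
        exact this
      have hL'N : L'.length ≤ N := by
        have hc : (p :: Ltl).length = Ltl.length + 1 := by simp
        omega
      have hNR' : NR L' := by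
        apply NR.suffix (L₁ := tk)
        rw [happ]
        exact hNR
      have hq1 : ∀ q ∈ L'.head?, q.1 ≠ s := by
        intro q hq hq1s
        have hL'ne : L' ≠ [] := by
          intro hnil; rw [hnil] at hq; simp at hq
        have hDne : (p :: Ltl).dropWhile (fun q' => decide (q' = p)) ≠ [] := by
          rw [← hL']; exact hL'ne
        have hq' : ((p :: Ltl).dropWhile (fun q' => decide (q' = p))).head? = some q := by
          rw [← hL']; exact hq
        have hhead := List.head_dropWhile_not (fun q' => decide (q' = p)) hDne
        have hqeq : q = ((p :: Ltl).dropWhile (fun q' => decide (q' = p))).head hDne :=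
          Option.some.inj (hq'.symm.trans (List.head?_eq_head hDne))
        rw [← hqeq] at hhead
        have hqp : ¬ (q = p) := of_decide_eq_false hhead
        have hq2 : q = (s, !b) := by
          have hneq : q.2 ≠ b := by
            intro hh
            apply hqp
            rw [hp]
            have : q = (q.1, q.2) := rfl
            rw [this, hq1s, hh]
          have hq2' : q.2 = !b := by
            cases hqb : q.2 <;> cases b <;> simp_all
          have : q = (q.1, q.2) := rfl
          rw [this, hq1s, hq2']
        obtain ⟨q', tl, hq₀⟩ := List.exists_cons_of_ne_nil hL'ne
        have hq'q : q' = q := by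
          rw [hq₀] at hq
          simpa using hq
        rw [hq'q] at hq₀
        obtain ⟨k, hk⟩ : ∃ k, m = k + 1 := ⟨m - 1, by omega⟩
        apply hNR (List.replicate k p) tl s b
        rw [← happ, htk_rep, hk, List.replicate_succ', hq₀, hq2, hp]
        simp [List.append_assoc]
      -- the value of μ
      have hmu : (μh (FreeGroup.mk (p :: Ltl)) : M S)
          = ((Wu p : (M S)ˣ) : M S) ^ m * (μh (FreeGroup.mk L') : M S) := by
        rw [← happ, ← FreeGroup.mul_mk, map_mul, Units.val_mul, htk_rep, mk_replicate_pow,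
          map_pow, Units.val_pow_eq_pow_val, μ_mk_single]
      have hrun : (p :: Ltl).map Prod.fst = List.replicate m s ++ L'.map Prod.fst := by
        rw [← happ, List.map_append, htk_rep, List.map_replicate]
      rw [hmu, hrun, M.mul_def]
      have hwlen : (List.replicate m s ++ L'.map Prod.fst).length
          = m + (L'.map Prod.fst).length := by
        rw [List.length_append, List.length_replicate]
      rw [hwlen]
      have hFsupp : MSupp s (((Wu p : (M S)ˣ) : M S) ^ m) := by
        rw [hp]
        cases b with
        | true => exact MSupp_pow (MSupp_E s) m
        | false => exact MSupp_pow (MSupp_V s) m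
      rw [Finset.sum_eq_single_of_mem m (Finset.mem_range.2 (by omega))]
      · have htake : (List.replicate m s ++ L'.map Prod.fst).take m = List.replicate m s := by
          rw [List.take_append_of_le_length (by rw [List.length_replicate]),
            List.take_replicate, min_self]
        have hdrop : (List.replicate m s ++ L'.map Prod.fst).drop m = L'.map Prod.fst := by
          rw [List.drop_append_of_le_length (by rw [List.length_replicate]),
            List.drop_replicate]
          simp
        rw [htake, hdrop]
        apply mul_ne_zero
        · rw [hp]
          cases b with
          | true =>
            show (E s ^ m) (List.replicate m s) ≠ 0
            rw [Epow_full]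
            norm_num
          | false =>
            show (V s ^ m) (List.replicate m s) ≠ 0
            intro h0
            have := Vpow_sign s m hm m
            rw [h0, mul_zero] at this
            exact lt_irrefl 0 this
        · exact ih L' hL'N hNR'
      · intro i hi hne
        rw [Finset.mem_range] at hi
        rcases lt_or_gt_of_ne hne with hlt | hgt
        · have hdrop : (List.replicate m s ++ L'.map Prod.fst).drop i
              = List.replicate (m - i) s ++ L'.map Prod.fst := by
            rw [List.drop_append_of_le_length (by rw [List.length_replicate]; omega),
              List.drop_replicate]
          rw [hdrop, van L' s (by omega : 1 ≤ m - i) hq1, mul_zero]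
        · apply mul_eq_zero_of_left
          by_contra hF
          have hall := hFsupp _ hF
          have hL'ne : L' ≠ [] := by
            intro hnil
            rw [List.length_map, hnil] at hi
            simp at hi
            omega
          obtain ⟨q₀, tl, hq₀⟩ := List.exists_cons_of_ne_nil hL'ne
          have htake : (List.replicate m s ++ L'.map Prod.fst).take i
              = List.replicate m s ++ (L'.map Prod.fst).take (i - m) := by
            rw [List.take_append, List.take_replicate,
              min_eq_right (by omega : m ≤ i), List.length_replicate]
          have hmem : q₀.1 ∈ (List.replicate m s ++ L'.map Prod.fst).take i := by
            rw [htake]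
            apply List.mem_append_right
            rw [hq₀]
            obtain ⟨k, hk⟩ : ∃ k, i - m = k + 1 := ⟨i - m - 1, by omega⟩
            rw [hk]
            simp
          have := hall _ hmem
          exact hq1 q₀ (by rw [hq₀]; simp) this

theorem μh_inj : Function.Injective (μh : FreeGroup S →* (M S)ˣ) := by
  rw [injective_iff_map_eq_one]
  intro x hx
  by_contra hne
  classical
  have hNR : NR x.toWord := by
    intro L₂ L₃ s b heq
    have := FreeGroup.reduce_toWord x
    rw [heq] at this
    exact FreeGroup.reduce.not this
  have hlen : x.toWord ≠ [] := fun h => hne (FreeGroup.toWord_eq_nil_iff.mp h)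
  have hmain := main x.toWord.length x.toWord le_rfl hNR
  rw [FreeGroup.mk_toWord, hx] at hmain
  apply hmain
  rw [Units.val_one]
  exact M.one_of_ne (by simpa using hlen)

lemma μh_aug : ∀ x : FreeGroup S, (μh x : M S) [] = 1 := by
  intro x
  induction x using FreeGroup.induction_on with
  | C1 => rw [map_one, Units.val_one, M.one_nil]
  | of s =>
    have h : μh (FreeGroup.of s : FreeGroup S) = U s := FreeGroup.lift_apply_of
    rw [h, U_val, E_nil]
  | inv_of s _ =>
    have h : μh (FreeGroup.of s : FreeGroup S) = U s := FreeGroup.lift_apply_of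
    rw [map_inv, h, U_inv_val, V_nil]
  | mul x y ihx ihy =>
    rw [map_mul, Units.val_mul, M.mul_nil, ihx, ihy, mul_one]

end Main

section Order

variable {S : Type*}

/-- Length-then-lex order on words, w.r.t. an arbitrary well-ordering of `S`. -/
def LL (v w : List S) : Prop :=
  v.length < w.length ∨ (v.length = w.length ∧ List.Lex WellOrderingRel v w)

lemma LL_irrefl (v : List S) : ¬ LL v v := by
  intro h
  rcases h with h | ⟨_, h⟩
  · omega
  · haveI : IsStrictTotalOrder (List S) (List.Lex (WellOrderingRel : S → S → Prop)) :=
      @IsStrictTotalOrder.mk _ _ _ (@IsStrictOrder.mk _ _ _ ⟨fun _ _ _ h1 h2 => List.lex_trans (fun h1 h2 => _root_.trans h1 h2) h1 h2⟩)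
    exact irrefl_of (List.Lex (WellOrderingRel : S → S → Prop)) v h

lemma LL_trans {u v w : List S} (h1 : LL u v) (h2 : LL v w) : LL u w := by
  haveI : IsStrictTotalOrder (List S) (List.Lex (WellOrderingRel : S → S → Prop)) :=
    @IsStrictTotalOrder.mk _ _ _ (@IsStrictOrder.mk _ _ _ ⟨fun _ _ _ h1 h2 => List.lex_trans (fun h1 h2 => _root_.trans h1 h2) h1 h2⟩)
  rcases h1 with h1 | ⟨e1, h1⟩ <;> rcases h2 with h2 | ⟨e2, h2⟩
  · exact Or.inl (by omega)
  · exact Or.inl (by omega)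
  · exact Or.inl (by omega)
  · exact Or.inr ⟨by omega, _root_.trans h1 h2⟩

lemma LL_trichotomy (v w : List S) : LL v w ∨ v = w ∨ LL w v := by
  haveI : IsStrictTotalOrder (List S) (List.Lex (WellOrderingRel : S → S → Prop)) :=
    @IsStrictTotalOrder.mk _ _ _ (@IsStrictOrder.mk _ _ _ ⟨fun _ _ _ h1 h2 => List.lex_trans (fun h1 h2 => _root_.trans h1 h2) h1 h2⟩)
  rcases Nat.lt_trichotomy v.length w.length with h | h | h
  · exact Or.inl (Or.inl h)
  · rcases trichotomous_of (List.Lex (WellOrderingRel : S → S → Prop)) v w with hl | he | hl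
    · exact Or.inl (Or.inr ⟨h, hl⟩)
    · exact Or.inr (Or.inl he)
    · exact Or.inr (Or.inr (Or.inr ⟨h.symm, hl⟩))
  · exact Or.inr (Or.inr (Or.inl h))

lemma LL_length_le {v w : List S} (h : LL v w) : v.length ≤ w.length := by
  rcases h with h | ⟨h, _⟩ <;> omega

/-- Existence of a lex-least element among equal-length words. -/
lemma lex_min : ∀ (n : ℕ) (T : Set (List S)), T.Nonempty → (∀ l ∈ T, l.length = n) →
    ∃ mn ∈ T, ∀ l ∈ T, ¬ List.Lex WellOrderingRel l mn := by
  intro n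
  induction n with
  | zero =>
    intro T ⟨w, hw⟩ hlen
    have hwnil : w = [] := List.length_eq_zero_iff.mp (hlen w hw)
    refine ⟨w, hw, fun l hl hlex => ?_⟩
    rw [hwnil] at hlex
    exact List.not_lex_nil hlex
  | succ n ih =>
    intro T ⟨w, hw⟩ hlen
    set H : Set S := {a | ∃ l, a :: l ∈ T} with hH
    have hHne : H.Nonempty := by
      obtain ⟨a, l, rfl⟩ := List.exists_cons_of_ne_nil
        (by intro hnil; rw [hnil] at hw; have := hlen _ hw; simp at this : w ≠ [])
      exact ⟨a, l, hw⟩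
    obtain ⟨a₀, ha₀, ha₀min⟩ :=
      (WellOrderingRel.isWellOrder (α := S)).wf.has_min H hHne
    set T' : Set (List S) := {l | a₀ :: l ∈ T} with hT'
    have hT'ne : T'.Nonempty := ha₀
    have hT'len : ∀ l ∈ T', l.length = n := by
      intro l hl
      have := hlen _ hl
      simpa using this
    obtain ⟨m', hm'T, hm'min⟩ := ih T' hT'ne hT'len
    refine ⟨a₀ :: m', hm'T, fun l hl hlex => ?_⟩
    obtain ⟨b, l', rfl⟩ := List.exists_cons_of_ne_nil
      (by intro hnil; rw [hnil] at hl; have := hlen _ hl; simp at this : l ≠ [])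
    cases hlex with
    | cons h => exact hm'min l' hl h
    | rel h => exact ha₀min b ⟨l', hl⟩ h

/-- Every nonempty set of words has an `LL`-least element. -/
lemma LL_min (D : Set (List S)) (hne : D.Nonempty) :
    ∃ w ∈ D, ∀ v ∈ D, ¬ LL v w := by
  classical
  set N : Set ℕ := {n | ∃ l ∈ D, l.length = n} with hN
  have hNne : N.Nonempty := by
    obtain ⟨l, hl⟩ := hne
    exact ⟨l.length, l, hl, rfl⟩
  set n₀ := sInf N with hn₀
  have hn₀N : n₀ ∈ N := Nat.sInf_mem hNne
  set T : Set (List S) := {l | l ∈ D ∧ l.length = n₀} with hT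
  have hTne : T.Nonempty := by
    obtain ⟨l, hl, hlen⟩ := hn₀N
    exact ⟨l, hl, hlen⟩
  obtain ⟨w, ⟨hwD, hwlen⟩, hwmin⟩ := lex_min n₀ T hTne (fun l hl => hl.2)
  refine ⟨w, hwD, fun v hv hLL => ?_⟩
  have hvlen : n₀ ≤ v.length := Nat.sInf_le ⟨v, hv, rfl⟩
  rcases hLL with h | ⟨he, hlex⟩
  · omega
  · exact hwmin v ⟨hv, by omega⟩ hlex

/-- The Magnus-style order on coefficient functions. -/
def MLt (f g : M S) : Prop :=
  ∃ w, (∀ v, LL v w → f v = g v) ∧ f w < g w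

lemma MLt_irrefl (f : M S) : ¬ MLt f f := by
  rintro ⟨w, _, hlt⟩
  exact lt_irrefl _ hlt

lemma MLt_trans {f g h : M S} (h1 : MLt f g) (h2 : MLt g h) : MLt f h := by
  obtain ⟨w₁, e1, l1⟩ := h1
  obtain ⟨w₂, e2, l2⟩ := h2
  rcases LL_trichotomy w₁ w₂ with hw | hw | hw
  · refine ⟨w₁, fun v hv => ?_, ?_⟩
    · rw [e1 v hv, e2 v (LL_trans hv hw)]
    · rw [← e2 w₁ hw]
      exact l1
  · subst hw
    exact ⟨w₁, fun v hv => by rw [e1 v hv, e2 v hv], lt_trans l1 l2⟩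
  · refine ⟨w₂, fun v hv => ?_, ?_⟩
    · rw [e1 v (LL_trans hv hw), e2 v hv]
    · rw [e1 w₂ hw]
      exact l2

lemma MLt_total {f g : M S} (hne : f ≠ g) : MLt f g ∨ MLt g f := by
  classical
  set D : Set (List S) := {w | f w ≠ g w} with hD
  have hDne : D.Nonempty := by
    by_contra h
    apply hne
    funext l
    by_contra hl
    exact h ⟨l, hl⟩
  obtain ⟨w, hwD, hwmin⟩ := LL_min D hDne
  have heq : ∀ v, LL v w → f v = g v := by
    intro v hv
    by_contra hvne
    exact hwmin v hvne hv
  rcases lt_or_gt_of_ne hwD with h | h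
  · exact Or.inl ⟨w, heq, h⟩
  · exact Or.inr ⟨w, fun v hv => (heq v hv).symm, h⟩

lemma MLt_mul_right {f g h : M S} (hfg : MLt f g) (hh : h [] = 1) : MLt (f * h) (g * h) := by
  obtain ⟨w, heq, hlt⟩ := hfg
  have key : ∀ v, (LL v w ∨ v = w) →
      ∀ i ≤ v.length, i ≠ v.length → f (v.take i) = g (v.take i) := by
    intro v hv i hi hine
    apply heq
    left
    rw [List.length_take, min_eq_left hi]
    have := fun hvv : LL v w => LL_length_le hvv
    rcases hv with hv | rfl
    · have := LL_length_le hv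
      omega
    · omega
  constructor
  constructor
  · intro v hv
    rw [M.mul_def, M.mul_def]
    refine Finset.sum_congr rfl fun i hi => ?_
    rw [Finset.mem_range] at hi
    by_cases hiv : i = v.length
    · subst hiv
      rw [List.take_length, heq v hv]
    · rw [key v (Or.inl hv) i (by omega) hiv]
  · rw [M.mul_def, M.mul_def, Finset.sum_range_succ, Finset.sum_range_succ,
      List.take_length, List.drop_length, hh, mul_one, mul_one]
    have hsh : ∀ i ∈ Finset.range w.length,
        f (w.take i) * h (w.drop i) = g (w.take i) * h (w.drop i) := by
      intro i hi
      rw [Finset.mem_range] at hi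
      rw [key w (Or.inr rfl) i (by omega) (by omega)]
    rw [Finset.sum_congr rfl hsh]
    exact add_lt_add_right hlt _

lemma MLt_mul_left {f g h : M S} (hfg : MLt f g) (hh : h [] = 1) : MLt (h * f) (h * g) := by
  obtain ⟨w, heq, hlt⟩ := hfg
  have key : ∀ v, (LL v w ∨ v = w) →
      ∀ i, 1 ≤ i → i ≤ v.length → f (v.drop i) = g (v.drop i) := by
    intro v hv i h1 h2
    apply heq
    left
    rw [List.length_drop]
    rcases hv with hv | rfl
    · have := LL_length_le hv
      omega
    · omega
  refine ⟨w, ?_, ?_⟩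
  · intro v hv
    rw [M.mul_def, M.mul_def]
    refine Finset.sum_congr rfl fun i hi => ?_
    rw [Finset.mem_range] at hi
    by_cases hi0 : i = 0
    · subst hi0
      rw [List.drop_zero, heq v hv]
    · rw [key v (Or.inl hv) i (by omega) (by omega)]
  · rw [M.mul_def, M.mul_def, Finset.sum_range_succ', Finset.sum_range_succ',
      List.take_zero, List.drop_zero, hh, one_mul, one_mul]
    have hsh : ∀ i ∈ Finset.range w.length,
        h (w.take (i+1)) * f (w.drop (i+1)) = h (w.take (i+1)) * g (w.drop (i+1)) := by
      intro i hi
      rw [Finset.mem_range] at hi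
      rw [key w (Or.inr rfl) (i+1) (by omega) (by omega)]
    rw [Finset.sum_congr rfl hsh]
    exact add_lt_add_right hlt _

end Order

section UCoxSide

variable {S : Type*}

/-- The inverting automorphism of the free group. -/
def σh : FreeGroup S →* FreeGroup S := FreeGroup.lift (fun s => (FreeGroup.of s)⁻¹)

@[simp] lemma σh_of (s : S) : σh (FreeGroup.of s) = (FreeGroup.of s)⁻¹ := FreeGroup.lift_apply_of

lemma σσ (x : FreeGroup S) : σh (σh x) = x := by
  have h : (σh.comp σh : FreeGroup S →* FreeGroup S) = MonoidHom.id _ := by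
    apply FreeGroup.ext_hom
    intro a
    simp
  have := congrArg (fun φ : FreeGroup S →* FreeGroup S => φ x) h
  simpa using this

/-- The twisted action of a generator. -/
def τ (s : S) : Equiv.Perm (FreeGroup S) where
  toFun x := FreeGroup.of s * σh x
  invFun x := FreeGroup.of s * σh x
  left_inv x := by
    show FreeGroup.of s * σh (FreeGroup.of s * σh x) = x
    rw [map_mul, σh_of, σσ, ← mul_assoc, mul_inv_cancel, one_mul]
  right_inv x := by
    show FreeGroup.of s * σh (FreeGroup.of s * σh x) = x
    rw [map_mul, σh_of, σσ, ← mul_assoc, mul_inv_cancel, one_mul]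

lemma τ_apply (s : S) (x : FreeGroup S) : τ s x = FreeGroup.of s * σh x := rfl

lemma τ_sq (s : S) : τ s * τ s = 1 := by
  apply Equiv.ext
  intro x
  rw [Equiv.Perm.mul_apply]
  show τ s (FreeGroup.of s * σh x) = x
  rw [τ_apply, map_mul, σh_of, σσ, ← mul_assoc, mul_inv_cancel, one_mul]

/-- The permutation representation of the universal Coxeter group. -/
def ρh : UCox S →* Equiv.Perm (FreeGroup S) :=
  PresentedGroup.toGroup (f := τ) (by
    rintro r ⟨s, rfl⟩
    rw [map_pow, FreeGroup.lift_apply_of, pow_two, τ_sq])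

@[simp] lemma ρ_of (s : S) : ρh (PresentedGroup.of s : UCox S) = τ s :=
  PresentedGroup.toGroup.of _

/-- The sign homomorphism. -/
def εh : UCox S →* Multiplicative (ZMod 2) :=
  PresentedGroup.toGroup (f := fun _ => Multiplicative.ofAdd 1) (by
    rintro r ⟨s, rfl⟩
    rw [map_pow, FreeGroup.lift_apply_of, pow_two]
    decide)

@[simp] lemma ε_of (s : S) : εh (PresentedGroup.of s : UCox S) = Multiplicative.ofAdd 1 :=
  PresentedGroup.toGroup.of _

/-- The retraction sending `x_s` to `s·t`. -/
def πt (t : S) : FreeGroup S →* UCox S :=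
  FreeGroup.lift (fun s => PresentedGroup.of s * PresentedGroup.of t)

@[simp] lemma πt_of (t s : S) :
    πt t (FreeGroup.of s) = (PresentedGroup.of s : UCox S) * PresentedGroup.of t :=
  FreeGroup.lift_apply_of

lemma of_sq (s : S) : (PresentedGroup.of s : UCox S) * PresentedGroup.of s = 1 := by
  have h1 : PresentedGroup.mk _ ((FreeGroup.of s : FreeGroup S) ^ 2) = (1 : UCox S) :=
    (QuotientGroup.eq_one_iff _).2 (Subgroup.subset_normalClosure ⟨s, rfl⟩)
  calc (PresentedGroup.of s : UCox S) * PresentedGroup.of s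
      = PresentedGroup.mk _ ((FreeGroup.of s : FreeGroup S) ^ 2) := by
        rw [pow_two, map_mul]
        rfl
    _ = 1 := h1

lemma of_inv (s : S) : (PresentedGroup.of s : UCox S)⁻¹ = PresentedGroup.of s :=
  inv_eq_of_mul_eq_one_right (of_sq s)

lemma πσ (t : S) (x : FreeGroup S) :
    πt t (σh x) = PresentedGroup.of t * πt t x * (PresentedGroup.of t : UCox S)⁻¹ := by
  have h : ((πt t).comp σh : FreeGroup S →* UCox S)
      = (MulAut.conj (PresentedGroup.of t : UCox S)).toMonoidHom.comp (πt t) := by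
    apply FreeGroup.ext_hom
    intro a
    show πt t (σh (FreeGroup.of a))
        = PresentedGroup.of t * πt t (FreeGroup.of a) * (PresentedGroup.of t : UCox S)⁻¹
    rw [σh_of, map_inv, πt_of, mul_inv_rev, of_inv, of_inv]
    have hh : PresentedGroup.of t * (PresentedGroup.of a * PresentedGroup.of t) *
          PresentedGroup.of t
        = PresentedGroup.of t * PresentedGroup.of a *
          ((PresentedGroup.of t : UCox S) * PresentedGroup.of t) := by
      group
    rw [hh, of_sq, mul_one]
  exact congrArg (fun φ : FreeGroup S →* UCox S => φ x) h

/-- The parity dichotomy for elements of the universal Coxeter group. -/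
def Pred (t : S) (u : UCox S) : Prop :=
  (εh u = 1 ∧ (∀ x, ρh u x = ρh u 1 * x) ∧ πt t (ρh u 1) = u) ∨
  (εh u = Multiplicative.ofAdd 1 ∧ (∀ x, ρh u x = ρh u 1 * σh x) ∧
    πt t (ρh u 1) = u * PresentedGroup.of t)

lemma pred_of (t s : S) : Pred t (PresentedGroup.of s : UCox S) := by
  right
  refine ⟨ε_of s, ?_, ?_⟩
  · intro x
    rw [ρ_of, τ_apply, τ_apply, map_one, mul_one]
  · rw [ρ_of, τ_apply, map_one, mul_one, πt_of]

lemma pred_mul (t : S) {u v : UCox S} (hu : Pred t u) (hv : Pred t v) : Pred t (u * v) := by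
  have happ : ∀ x, ρh (u * v) x = ρh u (ρh v x) := by
    intro x
    rw [map_mul, Equiv.Perm.mul_apply]
  rcases hu with ⟨e1, P1, g1⟩ | ⟨e1, Q1, g1⟩ <;> rcases hv with ⟨e2, P2, g2⟩ | ⟨e2, Q2, g2⟩
  · -- even, even
    left
    have hval : ρh (u * v) 1 = ρh u 1 * ρh v 1 := by
      rw [happ, P1]
    refine ⟨by rw [map_mul, e1, e2, one_mul], ?_, ?_⟩
    · intro x
      rw [happ, P2, P1, hval, mul_assoc]
    · rw [hval, map_mul, g1, g2]
  · -- even, odd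
    right
    have hval : ρh (u * v) 1 = ρh u 1 * ρh v 1 := by
      rw [happ, P1]
    refine ⟨by rw [map_mul, e1, e2, one_mul], ?_, ?_⟩
    · intro x
      rw [happ, Q2, P1, hval, mul_assoc]
    · rw [hval, map_mul, g1, g2, mul_assoc]
  · -- odd, even
    right
    have hval : ρh (u * v) 1 = ρh u 1 * σh (ρh v 1) := by
      rw [happ, Q1]
    refine ⟨by rw [map_mul, e1, e2, mul_one], ?_, ?_⟩
    · intro x
      rw [happ, P2, Q1, hval, map_mul, mul_assoc]
    · rw [hval, map_mul, g1, πσ, g2, of_inv]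
      have hh : (u * PresentedGroup.of t) * (PresentedGroup.of t * v * PresentedGroup.of t)
          = u * (PresentedGroup.of t * PresentedGroup.of t) * (v * PresentedGroup.of t) := by
        group
      rw [hh, of_sq, mul_one, ← mul_assoc]
  · -- odd, odd
    left
    have hval : ρh (u * v) 1 = ρh u 1 * σh (ρh v 1) := by
      rw [happ, Q1]
    refine ⟨?_, ?_, ?_⟩
    · rw [map_mul, e1, e2]
      decide
    · intro x
      rw [happ, Q2, Q1, map_mul, σσ, hval, mul_assoc]
    · rw [hval, map_mul, g1, πσ, g2, of_inv]
      have hh : (u * PresentedGroup.of t) *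
            (PresentedGroup.of t * (v * PresentedGroup.of t) * PresentedGroup.of t)
          = u * (PresentedGroup.of t * PresentedGroup.of t) * v *
            (PresentedGroup.of t * PresentedGroup.of t) := by
        group
      rw [hh, of_sq, mul_one, mul_one]

lemma pred_all (t : S) (u : UCox S) : Pred t u := by
  refine PresentedGroup.induction_on u ?_
  intro z
  induction z using FreeGroup.induction_on with
  | C1 =>
    rw [map_one]
    left
    refine ⟨map_one εh, ?_, ?_⟩
    · intro x
      rw [map_one ρh]
      show (1 : Equiv.Perm (FreeGroup S)) x = (1 : Equiv.Perm (FreeGroup S)) 1 * x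
      rw [Equiv.Perm.one_apply, Equiv.Perm.one_apply, one_mul]
    · rw [map_one ρh]
      show πt t ((1 : Equiv.Perm (FreeGroup S)) 1) = 1
      rw [Equiv.Perm.one_apply, map_one]
  | of s => exact pred_of t s
  | inv_of s _ =>
    rw [map_inv]
    have h1 : (PresentedGroup.mk _ (FreeGroup.of s) : UCox S) = PresentedGroup.of s := rfl
    rw [h1, of_inv]
    exact pred_of t s
  | mul x y ihx ihy =>
    rw [map_mul]
    exact pred_mul t ihx ihy

end UCoxSide

end FIQ

/-- The free involutory quandle on `S`, i.e. the Dehn quandle of the universal Coxeter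
group on `S` with respect to its standard generators, is left orderable: it admits a
strict linear order preserved by all left translations `x ↦ z * x` (here
`dehnOp z a` is the paper's `z * a`, with `a` the acting element varying). -/
theorem free_involutory_quandle_left_orderable (S : Type*) :
    ∃ r : conjSet (UCox S) (Set.range (PresentedGroup.of : S → UCox S)) →
          conjSet (UCox S) (Set.range (PresentedGroup.of : S → UCox S)) → Prop,
      IsStrictTotalOrder _ r ∧
      ∀ z a b : conjSet (UCox S) (Set.range (PresentedGroup.of : S → UCox S)),
        r a b → r (dehnOp z a) (dehnOp z b) := by
  classical
  cases isEmpty_or_nonempty S with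
  | inl hS =>
    have hempty : IsEmpty (conjSet (UCox S) (Set.range (PresentedGroup.of : S → UCox S))) := by
      constructor
      rintro ⟨x, hx⟩
      obtain ⟨s', hs', g, rfl⟩ :=
        (hx : ∃ s ∈ Set.range (PresentedGroup.of : S → UCox S), ∃ g : UCox S, x = g * s * g⁻¹)
      obtain ⟨s₀, -⟩ := hs'
      exact isEmptyElim s₀
    refine ⟨fun _ _ => False, ?_, fun z a b hab => hab.elim⟩
    exact @IsStrictTotalOrder.mk _ _ ⟨fun a => isEmptyElim a⟩
      (@IsStrictOrder.mk _ _ ⟨fun a => isEmptyElim a⟩ ⟨fun a => isEmptyElim a⟩)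
  | inr hS =>
    obtain ⟨t⟩ := hS
    have hconj : ∀ a : conjSet (UCox S) (Set.range (PresentedGroup.of : S → UCox S)),
        FIQ.εh (a : UCox S) = Multiplicative.ofAdd 1 := by
      rintro ⟨x, hx⟩
      obtain ⟨s', hs', g, rfl⟩ :=
        (hx : ∃ s ∈ Set.range (PresentedGroup.of : S → UCox S), ∃ g : UCox S, x = g * s * g⁻¹)
      obtain ⟨s₀, rfl⟩ := hs'
      show FIQ.εh (g * PresentedGroup.of s₀ * g⁻¹) = Multiplicative.ofAdd 1
      rw [map_mul, map_mul, map_inv, FIQ.ε_of]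
      have hcomm : ∀ u v : Multiplicative (ZMod 2), u * v * u⁻¹ = v := by decide
      exact hcomm _ _
    have hsq : ∀ a : conjSet (UCox S) (Set.range (PresentedGroup.of : S → UCox S)),
        (a : UCox S) * (a : UCox S) = 1 := by
      rintro ⟨x, hx⟩
      obtain ⟨s', hs', g, rfl⟩ :=
        (hx : ∃ s ∈ Set.range (PresentedGroup.of : S → UCox S), ∃ g : UCox S, x = g * s * g⁻¹)
      obtain ⟨s₀, rfl⟩ := hs'
      show (g * PresentedGroup.of s₀ * g⁻¹) * (g * PresentedGroup.of s₀ * g⁻¹) = 1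
      have h1 : (g * PresentedGroup.of s₀ * g⁻¹) * (g * PresentedGroup.of s₀ * g⁻¹)
          = g * (PresentedGroup.of s₀ * PresentedGroup.of s₀) * g⁻¹ := by group
      rw [h1, FIQ.of_sq, mul_one, mul_inv_cancel]
    have hainv : ∀ a : conjSet (UCox S) (Set.range (PresentedGroup.of : S → UCox S)),
        ((a : UCox S))⁻¹ = (a : UCox S) := fun a => inv_eq_of_mul_eq_one_right (hsq a)
    have hP : ∀ u : UCox S, FIQ.εh u = 1 →
        (∀ x, FIQ.ρh u x = FIQ.ρh u 1 * x) ∧ FIQ.πt t (FIQ.ρh u 1) = u := by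
      intro u hu
      rcases FIQ.pred_all t u with ⟨_, h2, h3⟩ | ⟨h1, _, _⟩
      · exact ⟨h2, h3⟩
      · rw [hu] at h1
        exact absurd h1 (by decide)
    have heven_at : ∀ a : conjSet (UCox S) (Set.range (PresentedGroup.of : S → UCox S)),
        FIQ.εh ((a : UCox S) * PresentedGroup.of t) = 1 := by
      intro a
      rw [map_mul, hconj a, FIQ.ε_of]
      decide
    have heven_tz : ∀ z : conjSet (UCox S) (Set.range (PresentedGroup.of : S → UCox S)),
        FIQ.εh (PresentedGroup.of t * (z : UCox S)) = 1 := by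
      intro z
      rw [map_mul, hconj z, FIQ.ε_of]
      decide
    set ι : conjSet (UCox S) (Set.range (PresentedGroup.of : S → UCox S)) → FreeGroup S :=
      fun a => FIQ.ρh ((a : UCox S) * PresentedGroup.of t) 1 with hι
    have hπι : ∀ a, FIQ.πt t (ι a) = (a : UCox S) * PresentedGroup.of t :=
      fun a => (hP _ (heven_at a)).2
    have hι_inj : Function.Injective ι := by
      intro a b hab
      have h1 := congrArg (FIQ.πt t) hab
      rw [hπι a, hπι b] at h1
      exact Subtype.ext (mul_right_cancel h1)
    have hkey : ∀ z a, ι (dehnOp z a)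
        = ι a * FIQ.ρh (PresentedGroup.of t * (z : UCox S)) 1 * ι a := by
      intro z a
      have hcoe : ((dehnOp z a : conjSet (UCox S)
            (Set.range (PresentedGroup.of : S → UCox S))) : UCox S)
          = (a : UCox S) * (z : UCox S) * ((a : UCox S))⁻¹ := rfl
      have helem : ((dehnOp z a : conjSet (UCox S)
            (Set.range (PresentedGroup.of : S → UCox S))) : UCox S) * PresentedGroup.of t
          = ((a : UCox S) * PresentedGroup.of t) *
            ((PresentedGroup.of t * (z : UCox S)) * ((a : UCox S) * PresentedGroup.of t)) := by
        rw [hcoe, hainv a]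
        have h2 := FIQ.of_sq t
        have h3 : ((a : UCox S) * PresentedGroup.of t) *
              ((PresentedGroup.of t * (z : UCox S)) * ((a : UCox S) * PresentedGroup.of t))
            = (a : UCox S) * (PresentedGroup.of t * PresentedGroup.of t) *
              ((z : UCox S) * ((a : UCox S) * PresentedGroup.of t)) := by group
        rw [h3, h2, mul_one]
        group
      have hPat := hP _ (heven_at a)
      have hPtz := hP _ (heven_tz z)
      show FIQ.ρh (((dehnOp z a : conjSet (UCox S)
          (Set.range (PresentedGroup.of : S → UCox S))) : UCox S) * PresentedGroup.of t) 1 = _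
      rw [helem]
      rw [map_mul FIQ.ρh ((a : UCox S) * PresentedGroup.of t)
        ((PresentedGroup.of t * (z : UCox S)) * ((a : UCox S) * PresentedGroup.of t))]
      rw [map_mul FIQ.ρh (PresentedGroup.of t * (z : UCox S))
        ((a : UCox S) * PresentedGroup.of t)]
      rw [Equiv.Perm.mul_apply, Equiv.Perm.mul_apply]
      rw [hPat.1 (FIQ.ρh (PresentedGroup.of t * (z : UCox S))
            (FIQ.ρh ((a : UCox S) * PresentedGroup.of t) 1)),
          hPtz.1 (FIQ.ρh ((a : UCox S) * PresentedGroup.of t) 1)]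
      rw [← mul_assoc]
    refine ⟨fun a b => FIQ.MLt ((FIQ.μh (ι a) : (FIQ.M S)ˣ) : FIQ.M S)
        ((FIQ.μh (ι b) : (FIQ.M S)ˣ) : FIQ.M S), ?_, ?_⟩
    · have htri : ∀ a b, FIQ.MLt ((FIQ.μh (ι a) : (FIQ.M S)ˣ) : FIQ.M S)
          ((FIQ.μh (ι b) : (FIQ.M S)ˣ) : FIQ.M S) ∨ a = b ∨
          FIQ.MLt ((FIQ.μh (ι b) : (FIQ.M S)ˣ) : FIQ.M S)
          ((FIQ.μh (ι a) : (FIQ.M S)ˣ) : FIQ.M S) := by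
        intro a b
        rcases eq_or_ne a b with rfl | hne
        · exact Or.inr (Or.inl rfl)
        · have h1 : ι a ≠ ι b := fun h => hne (hι_inj h)
          have h2 : FIQ.μh (ι a) ≠ FIQ.μh (ι b) := fun h => h1 (FIQ.μh_inj h)
          have h3 : ((FIQ.μh (ι a) : (FIQ.M S)ˣ) : FIQ.M S)
              ≠ ((FIQ.μh (ι b) : (FIQ.M S)ˣ) : FIQ.M S) := fun h => h2 (Units.ext h)
          rcases FIQ.MLt_total h3 with h | h
          · exact Or.inl h
          · exact Or.inr (Or.inr h)
      exact @IsStrictTotalOrder.mk _ _ ⟨fun a b h1 h2 => ((htri a b).resolve_left h1).resolve_right h2⟩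
        (@IsStrictOrder.mk _ _ ⟨fun a => FIQ.MLt_irrefl _⟩
          ⟨fun a b c hab hbc => FIQ.MLt_trans hab hbc⟩)
    · -- monotone
      intro z a b hab
      have hcz : ∃ cz, cz = FIQ.ρh (PresentedGroup.of t * (z : UCox S)) 1 := ⟨_, rfl⟩
      obtain ⟨cz, hcz⟩ := hcz
      show FIQ.MLt ((FIQ.μh (ι (dehnOp z a)) : (FIQ.M S)ˣ) : FIQ.M S)
          ((FIQ.μh (ι (dehnOp z b)) : (FIQ.M S)ˣ) : FIQ.M S)
      rw [hkey z a, hkey z b, ← hcz]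
      rw [map_mul FIQ.μh (ι a * cz) (ι a), map_mul FIQ.μh (ι a) cz,
          map_mul FIQ.μh (ι b * cz) (ι b), map_mul FIQ.μh (ι b) cz,
          Units.val_mul, Units.val_mul, Units.val_mul, Units.val_mul]
      have hA : ((FIQ.μh (ι a) : (FIQ.M S)ˣ) : FIQ.M S) [] = 1 := FIQ.μh_aug _
      have hB : ((FIQ.μh (ι b) : (FIQ.M S)ˣ) : FIQ.M S) [] = 1 := FIQ.μh_aug _
      have hC : ((FIQ.μh cz : (FIQ.M S)ˣ) : FIQ.M S) [] = 1 := FIQ.μh_aug _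
      have hab' : FIQ.MLt ((FIQ.μh (ι a) : (FIQ.M S)ˣ) : FIQ.M S)
          ((FIQ.μh (ι b) : (FIQ.M S)ˣ) : FIQ.M S) := hab
      have hCA : (((FIQ.μh cz : (FIQ.M S)ˣ) : FIQ.M S) *
            ((FIQ.μh (ι a) : (FIQ.M S)ˣ) : FIQ.M S)) [] = 1 := by
        rw [FIQ.M.mul_nil, hC, hA, mul_one]
      have hBC : (((FIQ.μh (ι b) : (FIQ.M S)ˣ) : FIQ.M S) *
            ((FIQ.μh cz : (FIQ.M S)ˣ) : FIQ.M S)) [] = 1 := by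
        rw [FIQ.M.mul_nil, hC, hB, mul_one]
      have step1 := FIQ.MLt_mul_right hab' hCA
      have step2 := FIQ.MLt_mul_left hab' hBC
      rw [mul_assoc]
      refine FIQ.MLt_trans step1 ?_
      rw [show ((FIQ.μh (ι b) : (FIQ.M S)ˣ) : FIQ.M S) *
          (((FIQ.μh cz : (FIQ.M S)ˣ) : FIQ.M S) * ((FIQ.μh (ι a) : (FIQ.M S)ˣ) : FIQ.M S))
          = (((FIQ.μh (ι b) : (FIQ.M S)ˣ) : FIQ.M S) * ((FIQ.μh cz : (FIQ.M S)ˣ) : FIQ.M S)) *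
            ((FIQ.μh (ι a) : (FIQ.M S)ˣ) : FIQ.M S) from (mul_assoc _ _ _).symm]
      exact step2
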